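/- Let f : [-π,π] → ℝ be continuously differentiable. Then for all 0 < b ≤ π/2 and y > 0, |∫_0^b f(φ)/(φ² + y²) dφ − f(0)·(1/y)·arctan(b/y)| ≤ K·log(1 + b²/y²)/2 + K·b, where K = sup_{|φ| ≤ π} |f'(φ)|. -/

import Mathlib

open Real

theorem first_order_spectral_approx (f : ℝ → ℝ)
    (hf : ContDiffOn ℝ 1 f (Set.Icc (-π) π)) (K : ℝ)
    (hK : ∀ φ ∈ Set.Icc (-π) π, |derivWithin f (Set.Icc (-π) π) φ| ≤ K)
    (b y : ℝ) (hb : 0 < b) (hbπ : b ≤ π / 2) (hy : 0 < y) :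
    |(∫ φ in (0 : ℝ)..b, f φ / (φ ^ 2 + y ^ 2)) -
        f 0 * (1 / y) * Real.arctan (b / y)| ≤
      K * Real.log (1 + b ^ 2 / y ^ 2) / 2 + K * b := by
  have hπ := Real.pi_pos
  have hbπ' : b ≤ π := by linarith
  have hsub : Set.Icc (0:ℝ) b ⊆ Set.Icc (-π) π := by
    intro x hx; exact ⟨by linarith [hx.1], by linarith [hx.2]⟩
  have hcont : ContinuousOn f (Set.Icc (-π) π) := hf.continuousOn
  have hdiff : DifferentiableOn ℝ f (Set.Icc (-π) π) :=
    hf.differentiableOn one_ne_zero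
  have hK0 : 0 ≤ K :=
    le_trans (abs_nonneg _) (hK 0 ⟨by linarith, by linarith⟩)
  -- Lipschitz estimate
  have hLip : ∀ φ ∈ Set.Icc (0:ℝ) b, |f φ - f 0| ≤ K * φ := by
    intro φ hφ
    have h0 : (0:ℝ) ∈ Set.Icc (-π) π := ⟨by linarith, by linarith⟩
    have hφ' : φ ∈ Set.Icc (-π) π := hsub hφ
    have := (convex_Icc (-π) π).norm_image_sub_le_of_norm_derivWithin_le
      hdiff (fun x hx => hK x hx) h0 hφ'
    simpa [Real.norm_eq_abs, abs_of_nonneg hφ.1] using this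
  have hden : ∀ x : ℝ, (0:ℝ) < x ^ 2 + y ^ 2 := fun x =>
    add_pos_of_nonneg_of_pos (sq_nonneg x) (pow_pos hy 2)
  have hcontden : Continuous fun x : ℝ => x ^ 2 + y ^ 2 := by continuity
  have huIcc : Set.uIcc (0:ℝ) b = Set.Icc 0 b := Set.uIcc_of_le hb.le
  -- integrability
  have hint1 : IntervalIntegrable (fun φ => f φ / (φ ^ 2 + y ^ 2)) MeasureTheory.volume 0 b := by
    apply ContinuousOn.intervalIntegrable
    rw [huIcc]
    exact (hcont.mono hsub).div (hcontden.continuousOn) (fun x _ => (hden x).ne')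
  have hint2 : IntervalIntegrable (fun φ => f 0 / (φ ^ 2 + y ^ 2)) MeasureTheory.volume 0 b := by
    apply ContinuousOn.intervalIntegrable
    rw [huIcc]
    exact (continuousOn_const).div (hcontden.continuousOn) (fun x _ => (hden x).ne')
  have hintK : IntervalIntegrable (fun φ => K * φ / (φ ^ 2 + y ^ 2)) MeasureTheory.volume 0 b := by
    apply ContinuousOn.intervalIntegrable
    rw [huIcc]
    exact ((continuousOn_const.mul continuousOn_id).div (hcontden.continuousOn)
      (fun x _ => (hden x).ne'))
  -- value of the constant integral
  have hF : ∀ x : ℝ, HasDerivAt (fun t => (1 / y) * Real.arctan (t / y))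
      (1 / (x ^ 2 + y ^ 2)) x := by
    intro x
    have h1 : HasDerivAt (fun t : ℝ => t / y) (1 / y) x := by
      simpa using (hasDerivAt_id x).div_const y
    have h2 := (Real.hasDerivAt_arctan (x / y)).comp x h1
    have h3 := h2.const_mul (1 / y)
    refine h3.congr_deriv ?_
    field_simp
    ring
  have hconst : (∫ φ in (0:ℝ)..b, f 0 / (φ ^ 2 + y ^ 2))
      = f 0 * (1 / y) * Real.arctan (b / y) := by
    have : (∫ φ in (0:ℝ)..b, 1 / (φ ^ 2 + y ^ 2))
        = (1 / y) * Real.arctan (b / y) - (1 / y) * Real.arctan (0 / y) := by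
      exact intervalIntegral.integral_eq_sub_of_hasDerivAt
        (fun x _ => hF x) (by
          apply ContinuousOn.intervalIntegrable
          rw [huIcc]
          exact continuousOn_const.div (hcontden.continuousOn) (fun x _ => (hden x).ne'))
    have h0 : Real.arctan (0 / y) = 0 := by simp
    calc (∫ φ in (0:ℝ)..b, f 0 / (φ ^ 2 + y ^ 2))
        = f 0 * ∫ φ in (0:ℝ)..b, 1 / (φ ^ 2 + y ^ 2) := by
          rw [← intervalIntegral.integral_const_mul]
          congr 1; ext φ; ring
      _ = f 0 * (1 / y) * Real.arctan (b / y) := by rw [this, h0]; ring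
  -- value of the K integral
  have hG : ∀ x : ℝ, HasDerivAt (fun t => (K / 2) * Real.log (t ^ 2 + y ^ 2))
      (K * x / (x ^ 2 + y ^ 2)) x := by
    intro x
    have h1 : HasDerivAt (fun t : ℝ => t ^ 2 + y ^ 2) (2 * x) x := by
      simpa using ((hasDerivAt_pow 2 x).add_const (y ^ 2))
    have h2 := (Real.hasDerivAt_log (hden x).ne').comp x h1
    have h3 := h2.const_mul (K / 2)
    refine h3.congr_deriv ?_
    field_simp
  have hKval : (∫ φ in (0:ℝ)..b, K * φ / (φ ^ 2 + y ^ 2))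
      = K * Real.log (1 + b ^ 2 / y ^ 2) / 2 := by
    have := intervalIntegral.integral_eq_sub_of_hasDerivAt (fun x _ => hG x) hintK
    rw [this]
    have hlog : Real.log (1 + b ^ 2 / y ^ 2)
        = Real.log (b ^ 2 + y ^ 2) - Real.log (y ^ 2) := by
      rw [← Real.log_div (hden b).ne' (pow_pos hy 2).ne']
      congr 1
      field_simp
      ring
    rw [hlog]
    simp only [ne_eq, OfNat.ofNat_ne_zero, not_false_eq_true, zero_pow, zero_add]
    ring
  -- main bound
  have hsplit : (∫ φ in (0:ℝ)..b, f φ / (φ ^ 2 + y ^ 2))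
      - f 0 * (1 / y) * Real.arctan (b / y)
      = ∫ φ in (0:ℝ)..b, (f φ - f 0) / (φ ^ 2 + y ^ 2) := by
    rw [← hconst, ← intervalIntegral.integral_sub hint1 hint2]
    congr 1; ext φ; ring
  rw [hsplit]
  have hbound : |∫ φ in (0:ℝ)..b, (f φ - f 0) / (φ ^ 2 + y ^ 2)|
      ≤ ∫ φ in (0:ℝ)..b, K * φ / (φ ^ 2 + y ^ 2) := by
    have hintabs : IntervalIntegrable (fun φ => |(f φ - f 0) / (φ ^ 2 + y ^ 2)|)
        MeasureTheory.volume 0 b := by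
      apply ContinuousOn.intervalIntegrable
      rw [huIcc]
      exact (((hcont.mono hsub).sub continuousOn_const).div (hcontden.continuousOn)
        (fun x _ => (hden x).ne')).abs
    have h1 : |∫ φ in (0:ℝ)..b, (f φ - f 0) / (φ ^ 2 + y ^ 2)|
        ≤ ∫ φ in (0:ℝ)..b, |(f φ - f 0) / (φ ^ 2 + y ^ 2)| :=
      intervalIntegral.abs_integral_le_integral_abs hb.le
    have h2 : (∫ φ in (0:ℝ)..b, |(f φ - f 0) / (φ ^ 2 + y ^ 2)|)
        ≤ ∫ φ in (0:ℝ)..b, K * φ / (φ ^ 2 + y ^ 2) := by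
      apply intervalIntegral.integral_mono_on hb.le hintabs hintK
      intro x hx
      rw [abs_div, abs_of_pos (hden x)]
      gcongr
      exact hLip x hx
    exact h1.trans h2
  calc |∫ φ in (0:ℝ)..b, (f φ - f 0) / (φ ^ 2 + y ^ 2)|
      ≤ ∫ φ in (0:ℝ)..b, K * φ / (φ ^ 2 + y ^ 2) := hbound
    _ = K * Real.log (1 + b ^ 2 / y ^ 2) / 2 := hKval
    _ ≤ K * Real.log (1 + b ^ 2 / y ^ 2) / 2 + K * b := by
        nlinarith [mul_nonneg hK0 hb.le]
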